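/- Let k and l be integers with k ≥ l ≥ 0 and k + l ≥ 2, and let α > 1 be a real root of x^3 − kx^2 − lx − 1. Set λ = 1/α and κ = l/α + 1/α^2. Then 0 < λ < 1, 0 < κ < 1, κ/λ = l + λ, and 1/λ = k + κ. -/
import Mathlib


/-- For integers `k ≥ l ≥ 0` with `k + l ≥ 2` and `α > 1` a real root of
`x^3 - kx^2 - lx - 1`, setting `λ = 1/α` and `κ = l/α + 1/α^2`, one has `0 < λ < 1`,
`0 < κ < 1`, `κ/λ = l + λ`, and `1/λ = k + κ`. -/
theorem stmt_13 (k l : ℤ) (hkl : l ≤ k) (hl : 0 ≤ l) (h2 : 2 ≤ k + l)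
    (α : ℝ) (hα : 1 < α)
    (hroot : α ^ 3 - (k : ℝ) * α ^ 2 - (l : ℝ) * α - 1 = 0) :
    0 < 1 / α ∧ 1 / α < 1 ∧
    0 < (l : ℝ) / α + 1 / α ^ 2 ∧ (l : ℝ) / α + 1 / α ^ 2 < 1 ∧
    ((l : ℝ) / α + 1 / α ^ 2) / (1 / α) = (l : ℝ) + 1 / α ∧
    1 / (1 / α) = (k : ℝ) + ((l : ℝ) / α + 1 / α ^ 2) := by
  have hα0 : (0:ℝ) < α := by linarith
  have hα0' : α ≠ 0 := ne_of_gt hα0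
  have hk1 : (1:ℤ) ≤ k := by omega
  have hkr : (1:ℝ) ≤ (k:ℝ) := by exact_mod_cast hk1
  have hlr : (0:ℝ) ≤ (l:ℝ) := by exact_mod_cast hl
  have hklr : (l:ℝ) ≤ (k:ℝ) := by exact_mod_cast hkl
  have hlt : α < (k:ℝ) + 1 := by nlinarith [sq_nonneg α, sq_nonneg (α - 1)]
  have heq : (l : ℝ) / α + 1 / α ^ 2 = α - k := by
    field_simp
    nlinarith [hroot]
  refine ⟨by positivity, ?_, ?_, ?_, ?_, ?_⟩
  · rw [div_lt_one hα0]; exact hα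
  · positivity
  · rw [heq]; linarith
  · rw [heq, div_div_eq_mul_div]
    field_simp
    nlinarith [hroot]
  · rw [heq, one_div_one_div]; ring
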